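/- Under the queue dynamics and the availability constraint, with Q^(l)(0) ≥ 0 for all l, the following finite-horizon counting bound holds for every lifetime l ∈ {1,…,L} and every horizon T ≥ 1: ∑_{t=0}^{T−1} xout^(≥l)(t) ≤ ∑_{m=l}^{L} Q^(m)(0) + ∑_{t=0}^{T−1} ( xin^(≥l+1)(t) + a^(≥l)(t) ); that is, the total amount of packets transmitted with current lifetime at least l over any horizon never exceeds the initial backlog of such packets plus the total receptions with lifetime at least l+1 plus the total exogenous arrivals with lifetime at least l. -/

import Mathlib

open Finset Filter Topology

lemma sum_shift_icc (l L : ℕ) (f : ℕ → ℝ) :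
    ∑ m ∈ Icc l L, f (m + 1) = ∑ m ∈ Icc (l + 1) (L + 1), f m := by
  rw [show Icc (l+1) (L+1) = (Icc l L).image (· + 1) from by
    ext x
    simp only [mem_Icc, mem_image]
    constructor
    · rintro ⟨h1, h2⟩; exact ⟨x - 1, ⟨by omega, by omega⟩, by omega⟩
    · rintro ⟨b, ⟨h1, h2⟩, rfl⟩; omega]
  rw [Finset.sum_image (by intro a _ b _ h; simp only at h; omega)]

/-- Under the lifetime-driven queue dynamics and the availability
constraint, the total outgoing traffic with current lifetime at least `l` over any
horizon `T ≥ 1` is bounded by the initial backlog of such packets, plus total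
receptions with lifetime at least `l+1`, plus total exogenous arrivals with
lifetime at least `l`. -/
theorem stmt1
    (L : ℕ) (hL : 1 ≤ L)
    (Q a xin xout : ℕ → ℕ → ℝ)
    (ha : ∀ t, ∀ l ∈ Icc 1 L, 0 ≤ a t l)
    (hxin : ∀ t, ∀ l ∈ Icc 1 L, 0 ≤ xin t l)
    (hxout : ∀ t, ∀ l ∈ Icc 1 L, 0 ≤ xout t l)
    (hQtop : ∀ t, Q t (L + 1) = 0)
    (hxintop : ∀ t, xin t (L + 1) = 0)
    (hxouttop : ∀ t, xout t (L + 1) = 0)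
    (hdyn : ∀ t, ∀ l ∈ Icc 1 L,
      Q (t + 1) l = Q t (l + 1) - xout t (l + 1) + xin t (l + 1) + a t l)
    (havail : ∀ t, ∀ l ∈ Icc 1 L, xout t l ≤ Q t l)
    (hinit : ∀ l ∈ Icc 1 L, 0 ≤ Q 0 l) :
    ∀ l ∈ Icc 1 L, ∀ T : ℕ, 1 ≤ T →
      ∑ t ∈ range T, ∑ m ∈ Icc l L, xout t m ≤
        (∑ m ∈ Icc l L, Q 0 m) +
          ∑ t ∈ range T, ((∑ m ∈ Icc (l + 1) L, xin t m) + ∑ m ∈ Icc l L, a t m) := by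
  have hQpos : ∀ t, ∀ l ∈ Icc 1 L, 0 ≤ Q t l := by
    intro t
    induction t with
    | zero => exact hinit
    | succ t ih =>
      intro l hl
      rw [hdyn t l hl]
      have hl' := mem_Icc.mp hl
      have h1 : xout t (l + 1) ≤ Q t (l + 1) := by
        rcases Nat.lt_or_ge l L with h | h
        · exact havail t (l + 1) (mem_Icc.mpr (by omega))
        · have : l = L := by omega
          subst this; rw [hxouttop, hQtop]
      have h2 : 0 ≤ xin t (l + 1) := by
        rcases Nat.lt_or_ge l L with h | h
        · exact hxin t (l + 1) (mem_Icc.mpr (by omega))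
        · have : l = L := by omega
          subst this; rw [hxintop]
      have h3 := ha t l hl
      linarith
  intro l hl T hT
  have hl' := mem_Icc.mp hl
  have key : ∀ t, ∑ m ∈ Icc l L, Q (t + 1) m + ∑ m ∈ Icc l L, xout t m ≤
      ∑ m ∈ Icc l L, Q t m +
        ((∑ m ∈ Icc (l + 1) L, xin t m) + ∑ m ∈ Icc l L, a t m) := by
    intro t
    have hEq : ∑ m ∈ Icc l L, Q (t + 1) m =
        ∑ m ∈ Icc (l + 1) L, (Q t m - xout t m + xin t m) + ∑ m ∈ Icc l L, a t m := by
      have h1 : ∀ m ∈ Icc l L, Q (t + 1) m =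
          (fun m => Q t m - xout t m + xin t m) (m + 1) + a t m := by
        intro m hm
        have hm' := mem_Icc.mp hm
        exact hdyn t m (mem_Icc.mpr (by omega))
      rw [Finset.sum_congr rfl h1, Finset.sum_add_distrib]
      congr 1
      rw [sum_shift_icc l L (fun m => Q t m - xout t m + xin t m)]
      rw [Finset.sum_Icc_succ_top (by omega : l + 1 ≤ L + 1)]
      simp [hQtop, hxouttop, hxintop]
    have hins : Icc l L = insert l (Icc (l + 1) L) := by
      ext x; simp only [mem_Icc, mem_insert]; omega
    have hsplit : ∀ f : ℕ → ℝ, ∑ m ∈ Icc l L, f m = f l + ∑ m ∈ Icc (l + 1) L, f m := by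
      intro f
      rw [hins, Finset.sum_insert (by simp only [mem_Icc]; omega)]
    have hav : xout t l ≤ Q t l := havail t l hl
    rw [hEq, Finset.sum_add_distrib, Finset.sum_sub_distrib,
      hsplit (Q t), hsplit (xout t)]
    linarith
  have aux : ∀ T : ℕ,
      ∑ t ∈ range T, ∑ m ∈ Icc l L, xout t m + ∑ m ∈ Icc l L, Q T m ≤
        (∑ m ∈ Icc l L, Q 0 m) +
          ∑ t ∈ range T, ((∑ m ∈ Icc (l + 1) L, xin t m) + ∑ m ∈ Icc l L, a t m) := by
    intro T
    induction T with
    | zero => simp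
    | succ T ih =>
      rw [Finset.sum_range_succ, Finset.sum_range_succ]
      have := key T
      linarith
  have hQT : 0 ≤ ∑ m ∈ Icc l L, Q T m := by
    apply Finset.sum_nonneg
    intro m hm
    have hm' := mem_Icc.mp hm
    exact hQpos T m (mem_Icc.mpr (by omega))
  have := aux T
  linarith
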